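/- Let a, b, c, d ∈ ℝ³ be affinely independent points (so the segments [a,b] and [c,d] lie on skew lines, are disjoint, and the four quadrilateral normals n₁, n₂, n₃, n₄ of (a,b,c,d) are defined). Then 4π·|L(a,b;c,d)| = arcsin(⟨n₁,n₂⟩) + arcsin(⟨n₂,n₃⟩) + arcsin(⟨n₃,n₄⟩) + arcsin(⟨n₄,n₁⟩). In other words, the Gauss linking integral of two segments admits the finite (integral-free) form given by the sum of the four arcsines of inner products of consecutive unit normals. -/

import Mathlib

open MeasureTheory RealInnerProductSpace

noncomputable section

/-- Euclidean 3-space. -/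
abbrev R3 := EuclideanSpace ℝ (Fin 3)

/-- The cross product on Euclidean 3-space. -/
def cross3 (u v : R3) : R3 :=
  (EuclideanSpace.equiv (Fin 3) ℝ).symm
    ![u 1 * v 2 - u 2 * v 1, u 2 * v 0 - u 0 * v 2, u 0 * v 1 - u 1 * v 0]

/-- The scalar triple product `det(u,v,w) = ⟨u × v, w⟩`. -/
def det3 (u v w : R3) : ℝ := ⟪cross3 u v, w⟫

/-- The Gauss linking integral of the segments `[a,b]` and `[c,d]`. -/
def gaussL (a b c d : R3) : ℝ :=
  (1 / (4 * Real.pi)) * ∫ t in (0:ℝ)..1, ∫ s in (0:ℝ)..1,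
    det3 (b - a) (d - c) ((a + t • (b - a)) - (c + s • (d - c))) /
      ‖(a + t • (b - a)) - (c + s • (d - c))‖ ^ 3

/-- The unit vector in the direction of `v`. -/
def unitVec (v : R3) : R3 := ‖v‖⁻¹ • v

/-- First quadrilateral normal of `(p,q,r,s)`. -/
def qn1 (p q r s : R3) : R3 := unitVec (cross3 (p - r) (p - s))

/-- Second quadrilateral normal of `(p,q,r,s)`. -/
def qn2 (p q r s : R3) : R3 := unitVec (cross3 (p - s) (q - s))

/-- Third quadrilateral normal of `(p,q,r,s)`. -/
def qn3 (p q r s : R3) : R3 := unitVec (cross3 (q - s) (q - r))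

/-- Fourth quadrilateral normal of `(p,q,r,s)`. -/
def qn4 (p q r s : R3) : R3 := unitVec (cross3 (q - r) (p - r))


/-! ### Auxiliary lemmas -/

section GaussAux

lemma cross3_0 (u v : R3) : cross3 u v 0 = u 1 * v 2 - u 2 * v 1 := rfl
lemma cross3_1 (u v : R3) : cross3 u v 1 = u 2 * v 0 - u 0 * v 2 := rfl
lemma cross3_2 (u v : R3) : cross3 u v 2 = u 0 * v 1 - u 1 * v 0 := rfl

lemma inner_r3 (x y : R3) : ⟪x, y⟫ = x 0 * y 0 + x 1 * y 1 + x 2 * y 2 := by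
  simp [PiLp.inner_apply, Fin.sum_univ_three, RCLike.inner_apply, conj_trivial]
  ring

lemma det3_expand (u v w : R3) : det3 u v w =
    (u 1 * v 2 - u 2 * v 1) * w 0 + (u 2 * v 0 - u 0 * v 2) * w 1 + (u 0 * v 1 - u 1 * v 0) * w 2 := by
  simp only [det3, inner_r3, cross3_0, cross3_1, cross3_2]

lemma det_of_li {x y z : R3} (h : LinearIndependent ℝ ![x, y, z]) : det3 x y z ≠ 0 := by
  set M : Matrix (Fin 3) (Fin 3) ℝ :=
    !![x 0, x 1, x 2; y 0, y 1, y 2; z 0, z 1, z 2] with hM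
  have hrows : (fun i => M i) =
      (⇑(EuclideanSpace.equiv (Fin 3) ℝ).toLinearEquiv ∘ ![x, y, z]) := by
    funext i
    fin_cases i <;> (funext j; fin_cases j <;> rfl)
  have hli : LinearIndependent ℝ (fun i => M i) := by
    rw [hrows]
    exact h.map' (EuclideanSpace.equiv (Fin 3) ℝ).toLinearEquiv.toLinearMap
      (LinearEquiv.ker _)
  have hunit : IsUnit M := Matrix.linearIndependent_rows_iff_isUnit.mp hli
  have hdet : M.det ≠ 0 := ((Matrix.isUnit_iff_isUnit_det M).mp hunit).ne_zero
  have : M.det = det3 x y z := by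
    rw [Matrix.det_fin_three, det3_expand]
    simp [hM]
    ring
  rw [← this]; exact hdet

lemma D_ne_zero {a b c d : R3} (h : AffineIndependent ℝ ![a, b, c, d]) :
    det3 (b - a) (d - c) (a - c) ≠ 0 := by
  rw [affineIndependent_iff_linearIndependent_vsub ℝ _ 0] at h
  have h' := h.comp (fun i : Fin 3 => (⟨i.succ, Fin.succ_ne_zero i⟩ : {x : Fin 4 // x ≠ 0}))
    (fun i j hij => Fin.succ_injective _ (congrArg Subtype.val hij))
  have heq : ((fun i : {x : Fin 4 // x ≠ 0} => ![a, b, c, d] ↑i -ᵥ ![a, b, c, d] 0) ∘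
      fun i : Fin 3 => (⟨i.succ, Fin.succ_ne_zero i⟩ : {x : Fin 4 // x ≠ 0}))
      = ![b - a, c - a, d - a] := by
    funext i
    fin_cases i <;> simp [Function.comp, vsub_eq_sub]
  rw [heq] at h'
  have hdet := det_of_li h'
  intro h0
  apply hdet
  rw [det3_expand] at h0 ⊢
  simp only [PiLp.sub_apply] at h0 ⊢
  linarith [h0]

/-! ### The vector field `W` and related quantities -/

def Wf (u v p : R3) (t s : ℝ) : R3 := p + t • u - s • v

def Kf (u v p : R3) (t : ℝ) : ℝ := ‖cross3 (p + t • u) v‖ ^ 2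

def Gf (u v p : R3) (t s : ℝ) : ℝ :=
  -(|det3 u v p| * ⟪Wf u v p t s, v⟫) / (Kf u v p t * ‖Wf u v p t s‖)

def Ff (u v p : R3) (t s : ℝ) : ℝ :=
  Real.arcsin (⟪cross3 (Wf u v p t s) u, cross3 (Wf u v p t s) v⟫ /
    (‖cross3 (Wf u v p t s) u‖ * ‖cross3 (Wf u v p t s) v‖))

lemma Wf_apply (u v p : R3) (t s : ℝ) (i : Fin 3) :
    Wf u v p t s i = p i + t * u i - s * v i := by simp [Wf]

lemma lagrange (x v : R3) : ⟪cross3 x v, cross3 x v⟫ = ⟪v,v⟫ * ⟪x,x⟫ - ⟪x,v⟫^2 := by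
  simp only [inner_r3, cross3_0, cross3_1, cross3_2]; ring

lemma P1 (x u v : R3) :
    ⟪cross3 x u, cross3 x u⟫ * ⟪cross3 x v, cross3 x v⟫ - ⟪cross3 x u, cross3 x v⟫^2
      = (det3 u v x)^2 * ⟪x,x⟫ := by
  simp only [det3, inner_r3, cross3_0, cross3_1, cross3_2]; ring

lemma P2 (x u v : R3) :
    ⟪cross3 x u, cross3 u v⟫ * ⟪cross3 x v, cross3 x v⟫
      - ⟪cross3 x u, cross3 x v⟫ * ⟪cross3 x v, cross3 u v⟫
      = -(det3 u v x)^2 * ⟪x, v⟫ := by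
  simp only [det3, inner_r3, cross3_0, cross3_1, cross3_2]; ring

lemma cross3_W_u (u v p : R3) (t s : ℝ) :
    cross3 (Wf u v p t s) u = cross3 (p - s • v) u := by
  ext i
  fin_cases i <;>
    simp only [Fin.zero_eta, Fin.mk_one, Fin.reduceFinMk, cross3_0, cross3_1, cross3_2, Wf_apply,
      PiLp.sub_apply, PiLp.smul_apply, smul_eq_mul] <;> ring

lemma cross3_W_v (u v p : R3) (t s : ℝ) :
    cross3 (Wf u v p t s) v = cross3 (p + t • u) v := by
  ext i
  fin_cases i <;>
    simp only [Fin.zero_eta, Fin.mk_one, Fin.reduceFinMk, cross3_0, cross3_1, cross3_2, Wf_apply,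
      PiLp.add_apply, PiLp.smul_apply, smul_eq_mul] <;> ring

lemma cross3_W_v' (u v p : R3) (t s : ℝ) :
    cross3 (Wf u v p t s) v = cross3 (p - s • v) v + t • cross3 u v := by
  ext i
  fin_cases i <;>
    simp only [Fin.zero_eta, Fin.mk_one, Fin.reduceFinMk, cross3_0, cross3_1, cross3_2, Wf_apply,
      PiLp.add_apply, PiLp.sub_apply, PiLp.smul_apply, smul_eq_mul] <;> ring

lemma cross3_sub_left (x y : R3) : cross3 (x - y) x = cross3 x y := by
  ext i
  fin_cases i <;>
    simp only [Fin.zero_eta, Fin.mk_one, Fin.reduceFinMk, cross3_0, cross3_1, cross3_2,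
      PiLp.sub_apply] <;> ring

lemma cross3_add_right (x y : R3) : cross3 x (x + y) = cross3 x y := by
  ext i
  fin_cases i <;>
    simp only [Fin.zero_eta, Fin.mk_one, Fin.reduceFinMk, cross3_0, cross3_1, cross3_2,
      PiLp.add_apply] <;> ring

lemma cross3_add_left (x y : R3) : cross3 (x + y) x = -cross3 x y := by
  ext i
  fin_cases i <;>
    simp only [Fin.zero_eta, Fin.mk_one, Fin.reduceFinMk, cross3_0, cross3_1, cross3_2,
      PiLp.add_apply, PiLp.neg_apply] <;> ring

lemma cross3_sub_right (x y : R3) : cross3 x (x - y) = -cross3 x y := by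
  ext i
  fin_cases i <;>
    simp only [Fin.zero_eta, Fin.mk_one, Fin.reduceFinMk, cross3_0, cross3_1, cross3_2,
      PiLp.sub_apply, PiLp.neg_apply] <;> ring

lemma inner_unitVec (x y : R3) : ⟪unitVec x, unitVec y⟫ = ⟪x, y⟫ / (‖x‖ * ‖y‖) := by
  rw [unitVec, unitVec, real_inner_smul_left, real_inner_smul_right]
  ring

lemma unitVec_neg (x : R3) : unitVec (-x) = -unitVec x := by
  rw [unitVec, unitVec, norm_neg, smul_neg]

section Core
variable {u v p : R3} (hD : det3 u v p ≠ 0)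

lemma det3_uvW (t s : ℝ) : det3 u v (Wf u v p t s) = det3 u v p := by
  simp only [det3_expand, Wf_apply]; ring

lemma inner_crossWv_u (t s : ℝ) : ⟪cross3 (Wf u v p t s) v, u⟫ = -det3 u v p := by
  simp only [inner_r3, cross3_0, cross3_1, cross3_2, det3_expand, Wf_apply]; ring

lemma inner_crossWu_v (t s : ℝ) : ⟪cross3 (Wf u v p t s) u, v⟫ = det3 u v p := by
  simp only [inner_r3, cross3_0, cross3_1, cross3_2, det3_expand, Wf_apply]; ring

lemma contW (t : ℝ) : Continuous (fun s => Wf u v p t s) := by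
  unfold Wf
  exact continuous_const.sub (continuous_id.smul continuous_const)

lemma contW' (s : ℝ) : Continuous (fun t => Wf u v p t s) := by
  unfold Wf
  exact ((continuous_const.add (continuous_id.smul continuous_const)).sub continuous_const)

include hD

lemma W_ne_zero (t s : ℝ) : Wf u v p t s ≠ 0 := by
  intro h0
  apply hD
  rw [← det3_uvW t s, h0]
  simp [det3]

lemma crossWv_ne_zero (t s : ℝ) : cross3 (Wf u v p t s) v ≠ 0 := by
  intro h0
  have := inner_crossWv_u (u := u) (v := v) (p := p) t s
  rw [h0] at this
  simp only [inner_zero_left] at this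
  exact hD (by linarith)

lemma crossWu_ne_zero (t s : ℝ) : cross3 (Wf u v p t s) u ≠ 0 := by
  intro h0
  have := inner_crossWu_v (u := u) (v := v) (p := p) t s
  rw [h0] at this
  simp only [inner_zero_left] at this
  exact hD this.symm

lemma K_pos (t : ℝ) : 0 < Kf u v p t := by
  have h := crossWv_ne_zero hD t 0
  rw [cross3_W_v] at h
  exact pow_pos (norm_pos_iff.mpr h) 2

lemma hasDerivG (t s : ℝ) :
    HasDerivAt (fun s' => Gf u v p t s') (|det3 u v p| / ‖Wf u v p t s‖ ^ 3) s := by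
  set q : R3 := p + t • u with hq
  set A := ⟪v, v⟫ with hA
  set B := ⟪q, v⟫ with hB
  set C := ⟪q, q⟫ with hC
  set E := |det3 u v p| with hE
  set K := Kf u v p t with hK
  have hKval : K = A * C - B ^ 2 := by
    rw [hK, Kf, ← real_inner_self_eq_norm_sq, lagrange]
  have hWsub : ∀ s' : ℝ, Wf u v p t s' = q - s' • v := fun s' => rfl
  have hinner : ∀ s' : ℝ, ⟪Wf u v p t s', v⟫ = B - s' * A := by
    intro s'
    rw [hWsub, inner_sub_left, real_inner_smul_left]
  have hQ : ∀ s' : ℝ, ⟪Wf u v p t s', Wf u v p t s'⟫ = C - 2*s'*B + s'^2*A := by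
    intro s'
    rw [hWsub, inner_sub_left, inner_sub_right, inner_sub_right, real_inner_smul_left,
      real_inner_smul_left, real_inner_smul_right, real_inner_smul_right, real_inner_comm q v]
    ring
  have hQpos : ∀ s' : ℝ, 0 < C - 2*s'*B + s'^2*A := by
    intro s'
    rw [← hQ]
    rw [real_inner_self_eq_norm_sq]
    exact pow_pos (norm_pos_iff.mpr (W_ne_zero hD t s')) 2
  have hnorm : ∀ s' : ℝ, ‖Wf u v p t s'‖ = Real.sqrt (C - 2*s'*B + s'^2*A) := by
    intro s'
    rw [norm_eq_sqrt_real_inner, hQ]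
  have hKpos : (0:ℝ) < K := K_pos hD t
  have hQ' : HasDerivAt (fun s' : ℝ => C - 2*s'*B + s'^2*A) (-(2*B) + 2*s*A) s := by
    have h1 : HasDerivAt (fun s' : ℝ => 2*s'*B) (2*B) s := by
      simpa using ((hasDerivAt_id s).const_mul 2).mul_const B
    have h2 : HasDerivAt (fun s' : ℝ => s'^2*A) (2*s*A) s := by
      simpa using (hasDerivAt_pow 2 s).mul_const A
    exact (h1.const_sub C).add h2
  have hsqQ : Real.sqrt (C - 2*s*B + s^2*A) ^ 2 = C - 2*s*B + s^2*A :=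
    Real.sq_sqrt (hQpos s).le
  have hsqpos : 0 < Real.sqrt (C - 2*s*B + s^2*A) := Real.sqrt_pos.mpr (hQpos s)
  have hsqrt : HasDerivAt (fun s' => Real.sqrt (C - 2*s'*B + s'^2*A))
      (1 / (2 * Real.sqrt (C - 2*s*B + s^2*A)) * (-(2*B) + 2*s*A)) s :=
    (Real.hasDerivAt_sqrt (hQpos s).ne').comp s hQ'
  have hnum : HasDerivAt (fun s' : ℝ => -(E * (B - s' * A))) (E*A) s := by
    have h1 : HasDerivAt (fun s' : ℝ => B - s' * A) (-A) s := by
      simpa using ((hasDerivAt_id s).mul_const A).const_sub B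
    exact (h1.const_mul E).neg.congr_deriv (by ring)
  have hden : HasDerivAt (fun s' : ℝ => K * Real.sqrt (C - 2*s'*B + s'^2*A))
      (K * (1 / (2 * Real.sqrt (C - 2*s*B + s^2*A)) * (-(2*B) + 2*s*A))) s :=
    hsqrt.const_mul K
  have hdenne : K * Real.sqrt (C - 2*s*B + s^2*A) ≠ 0 :=
    (mul_pos hKpos hsqpos).ne'
  have hdiv := hnum.div hden hdenne
  have hfun : (fun s' => Gf u v p t s')
      = fun s' => -(E * (B - s' * A)) / (K * Real.sqrt (C - 2*s'*B + s'^2*A)) := by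
    funext s'
    rw [Gf, hinner, hnorm]
  rw [hfun, hnorm s]
  refine hdiv.congr_deriv (Eq.symm ?_)
  set sq := Real.sqrt (C - 2*s*B + s^2*A)
  field_simp
  linear_combination E * hKval - (E*A) * hsqQ

lemma cont_integrand (t : ℝ) : Continuous (fun s => |det3 u v p| / ‖Wf u v p t s‖ ^ 3) :=
  continuous_const.div ((contW t).norm.pow 3)
    (fun s => pow_ne_zero 3 (norm_ne_zero_iff.mpr (W_ne_zero hD t s)))

lemma inner_integral (t : ℝ) :
    ∫ s in (0:ℝ)..1, |det3 u v p| / ‖Wf u v p t s‖ ^ 3 = Gf u v p t 1 - Gf u v p t 0 :=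
  intervalIntegral.integral_eq_sub_of_hasDerivAt (fun s _ => hasDerivG hD t s)
    ((cont_integrand hD t).intervalIntegrable 0 1)

lemma hasDerivF (s t : ℝ) :
    HasDerivAt (fun t' => Ff u v p t' s) (Gf u v p t s) t := by
  set c : R3 := cross3 (p - s • v) u with hc
  set N0 : R3 := cross3 (p - s • v) v with hN0
  set e : R3 := cross3 u v with he
  have hcu : ∀ t' : ℝ, cross3 (Wf u v p t' s) u = c := fun t' => cross3_W_u u v p t' s
  have hnv : ∀ t' : ℝ, cross3 (Wf u v p t' s) v = N0 + t' • e := fun t' => cross3_W_v' u v p t' s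
  set α := ⟪c, N0⟫ with hα
  set β := ⟪c, e⟫ with hβ
  set a2 := ⟪e, e⟫ with ha2
  set b2 := ⟪N0, e⟫ with hb2
  set c2 := ⟪N0, N0⟫ with hc2
  set m := ‖c‖ with hm
  set D := det3 u v p with hDdef
  set E := |D| with hE
  have hEpos : 0 < E := abs_pos.mpr hD
  have hE2 : E ^ 2 = D ^ 2 := sq_abs D
  have hmpos : 0 < m := by
    rw [hm, ← hcu 0]
    exact norm_pos_iff.mpr (crossWu_ne_zero hD 0 s)
  set r := ‖Wf u v p t s‖ with hr
  have hrpos : 0 < r := norm_pos_iff.mpr (W_ne_zero hD t s)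
  have hg1 : ∀ t' : ℝ, ⟪c, N0 + t' • e⟫ = α + t' * β := by
    intro t'; rw [inner_add_right, real_inner_smul_right]
  have hg2 : ∀ t' : ℝ, ⟪N0 + t' • e, N0 + t' • e⟫ = c2 + 2*t'*b2 + t'^2*a2 := by
    intro t'
    rw [inner_add_left, inner_add_right, inner_add_right, real_inner_smul_left,
      real_inner_smul_left, real_inner_smul_right, real_inner_smul_right, hb2, hc2, ha2]
    linear_combination (-t') * real_inner_comm e N0
  have hg2pos : ∀ t' : ℝ, 0 < c2 + 2*t'*b2 + t'^2*a2 := by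
    intro t'
    rw [← hg2, ← hnv, real_inner_self_eq_norm_sq]
    exact pow_pos (norm_pos_iff.mpr (crossWv_ne_zero hD t' s)) 2
  have hNn2 : ∀ t' : ℝ, ‖N0 + t' • e‖ = Real.sqrt (c2 + 2*t'*b2 + t'^2*a2) := by
    intro t'
    rw [norm_eq_sqrt_real_inner, hg2]
  have hNnorm : ∀ t' : ℝ, ‖cross3 (Wf u v p t' s) v‖ = Real.sqrt (c2 + 2*t'*b2 + t'^2*a2) := by
    intro t'
    rw [hnv, hNn2]
  set sg := Real.sqrt (c2 + 2*t*b2 + t^2*a2) with hsg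
  have hsgpos : 0 < sg := Real.sqrt_pos.mpr (hg2pos t)
  have hsg2 : sg ^ 2 = c2 + 2*t*b2 + t^2*a2 := Real.sq_sqrt (hg2pos t).le
  have hP1 : m^2 * (c2 + 2*t*b2 + t^2*a2) - (α + t*β)^2 = D^2 * r^2 := by
    have h1 := P1 (Wf u v p t s) u v
    rw [hcu, hnv, hg1, hg2, det3_uvW] at h1
    simp only [real_inner_self_eq_norm_sq] at h1
    exact h1
  set IP := ⟪Wf u v p t s, v⟫ with hIP
  have hP2 : β * (c2 + 2*t*b2 + t^2*a2) - (α + t*β) * (b2 + t*a2) = -(D^2) * IP := by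
    have h2 := P2 (Wf u v p t s) u v
    rw [hcu, hnv, hg1, hg2, det3_uvW] at h2
    have hNe : ⟪N0 + t • e, e⟫ = b2 + t * a2 := by
      rw [inner_add_left, real_inner_smul_left, hb2, ha2]
    rw [hNe] at h2
    linear_combination h2
  set q := (α + t*β) / (m * sg) with hq
  have hq2 : 1 - q^2 = (E*r/(m*sg))^2 := by
    rw [hq]
    field_simp
    linear_combination hP1 + m^2*hsg2 - r^2*hE2
  have hfrpos : 0 < E*r/(m*sg) := div_pos (mul_pos hEpos hrpos) (mul_pos hmpos hsgpos)
  have hq2pos : 0 < 1 - q^2 := by rw [hq2]; exact pow_pos hfrpos 2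
  have hqne1 : q ≠ 1 := by intro h; rw [h] at hq2pos; norm_num at hq2pos
  have hqne1' : q ≠ -1 := by intro h; rw [h] at hq2pos; norm_num at hq2pos
  have hsqrt1q : Real.sqrt (1 - q^2) = E*r/(m*sg) := by
    rw [hq2]; exact Real.sqrt_sq hfrpos.le
  have hg2' : HasDerivAt (fun t' : ℝ => c2 + 2*t'*b2 + t'^2*a2) (2*b2 + 2*t*a2) t := by
    have h1 : HasDerivAt (fun t' : ℝ => 2*t'*b2) (2*b2) t := by
      simpa using ((hasDerivAt_id t).const_mul 2).mul_const b2
    have h2 : HasDerivAt (fun t' : ℝ => t'^2*a2) (2*t*a2) t := by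
      simpa using (hasDerivAt_pow 2 t).mul_const a2
    exact (h1.const_add c2).add h2
  have hsgd : HasDerivAt (fun t' => Real.sqrt (c2 + 2*t'*b2 + t'^2*a2))
      (1 / (2 * sg) * (2*b2 + 2*t*a2)) t :=
    (Real.hasDerivAt_sqrt (hg2pos t).ne').comp t hg2'
  have hg1' : HasDerivAt (fun t' : ℝ => α + t' * β) β t := by
    simpa using ((hasDerivAt_id t).mul_const β).const_add α
  have hdenne : m * sg ≠ 0 := (mul_pos hmpos hsgpos).ne'
  have hdiv := hg1'.div (hsgd.const_mul m) hdenne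
  have harc := (Real.hasDerivAt_arcsin hqne1' hqne1).comp t hdiv
  have hfun : (fun t' => Ff u v p t' s)
      = fun t' => Real.arcsin ((α + t'*β) / (m * Real.sqrt (c2 + 2*t'*b2 + t'^2*a2))) := by
    funext t'
    rw [Ff, hcu, hnv, hg1, hNn2]
  rw [hfun]
  have hKg2 : Kf u v p t = sg ^ 2 := by
    rw [Kf, ← cross3_W_v u v p t s, hNnorm, ← hsg]
  have hGf : Gf u v p t s = -(E * IP) / (sg^2 * r) := by
    rw [Gf, hKg2]
  rw [hGf]
  refine harc.congr_deriv (Eq.symm ?_)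
  rw [← hsg, hsqrt1q]
  have hcomp : β * (m * sg) - (α + t * β) * (m * (1 / (2 * sg) * (2*b2 + 2*t*a2)))
      = (m / sg) * (β * sg^2 - (α + t*β)*(b2 + t*a2)) := by
    field_simp
  have hP2s : β * sg^2 - (α + t*β)*(b2 + t*a2) = -(D^2) * IP := by
    rw [hsg2]; linear_combination hP2
  rw [hcomp, hP2s, ← hE2]
  field_simp

lemma contG (s : ℝ) : Continuous (fun t => Gf u v p t s) := by
  have hKf : (fun t => Kf u v p t) = fun t => ‖cross3 (p - s • v) v + t • cross3 u v‖ ^ 2 := by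
    funext t
    rw [Kf, ← cross3_W_v u v p t s, cross3_W_v']
  have hKcont : Continuous (fun t => Kf u v p t) := by
    rw [hKf]
    exact ((continuous_const.add (continuous_id.smul continuous_const)).norm.pow 2)
  have hnum : Continuous (fun t => -(|det3 u v p| * ⟪Wf u v p t s, v⟫)) :=
    (continuous_const.mul ((contW' s).inner continuous_const)).neg
  have hden : Continuous (fun t => Kf u v p t * ‖Wf u v p t s‖) :=
    hKcont.mul (contW' s).norm
  exact hnum.div hden fun t =>
    (mul_pos (K_pos hD t) (norm_pos_iff.mpr (W_ne_zero hD t s))).ne'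

lemma outer_integral (s : ℝ) :
    ∫ t in (0:ℝ)..1, Gf u v p t s = Ff u v p 1 s - Ff u v p 0 s :=
  intervalIntegral.integral_eq_sub_of_hasDerivAt (fun t _ => hasDerivF hD s t)
    ((contG hD s).intervalIntegrable 0 1)

lemma double_integral :
    ∫ t in (0:ℝ)..1, ∫ s in (0:ℝ)..1, |det3 u v p| / ‖Wf u v p t s‖ ^ 3
      = Ff u v p 1 1 - Ff u v p 0 1 - (Ff u v p 1 0 - Ff u v p 0 0) := by
  have h1 : (fun t => ∫ s in (0:ℝ)..1, |det3 u v p| / ‖Wf u v p t s‖ ^ 3)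
      = fun t => Gf u v p t 1 - Gf u v p t 0 :=
    funext fun t => inner_integral hD t
  rw [h1, intervalIntegral.integral_sub ((contG hD 1).intervalIntegrable 0 1)
    ((contG hD 0).intervalIntegrable 0 1), outer_integral hD 1, outer_integral hD 0]

end Core

end GaussAux

/-- The Gauss linking integral of two segments spanned by affinely independent points
admits the finite form given by the sum of the four arcsines of inner products of
consecutive unit quadrilateral normals. -/
theorem gauss_linking_integral_finite_form (a b c d : R3)
    (h : AffineIndependent ℝ ![a, b, c, d]) :
    4 * Real.pi * |gaussL a b c d| =
      Real.arcsin ⟪qn1 a b c d, qn2 a b c d⟫ +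
        Real.arcsin ⟪qn2 a b c d, qn3 a b c d⟫ +
        Real.arcsin ⟪qn3 a b c d, qn4 a b c d⟫ +
        Real.arcsin ⟪qn4 a b c d, qn1 a b c d⟫ := by
  set u : R3 := b - a with hu
  set v : R3 := d - c with hv
  set p : R3 := a - c with hp
  have hD : det3 u v p ≠ 0 := D_ne_zero h
  set D := det3 u v p with hDdef
  set E := |D| with hE
  have hEpos : 0 < E := abs_pos.mpr hD
  -- identify the corners
  have hW11 : Wf u v p 1 1 = b - d := by
    rw [Wf, hu, hv, hp, one_smul, one_smul]; abel
  have hW10 : Wf u v p 1 0 = b - c := by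
    rw [Wf, hu, hp, one_smul, zero_smul]; abel
  have hW01 : Wf u v p 0 1 = a - d := by
    rw [Wf, hv, hp, one_smul, zero_smul]; abel
  have hW00 : Wf u v p 0 0 = a - c := by
    rw [Wf, hp, zero_smul, zero_smul]; abel
  have term2 : Real.arcsin ⟪qn2 a b c d, qn3 a b c d⟫ = Ff u v p 1 1 := by
    have e2 : cross3 (a - d) (b - d) = cross3 (Wf u v p 1 1) u := by
      rw [hW11, hu, show a - d = (b - d) - (b - a) by abel, cross3_sub_left]
    have e3 : cross3 (b - d) (b - c) = cross3 (Wf u v p 1 1) v := by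
      rw [hW11, hv, show b - c = (b - d) + (d - c) by abel, cross3_add_right]
    rw [qn2, qn3, e2, e3, inner_unitVec, Ff]
  have term4 : Real.arcsin ⟪qn4 a b c d, qn1 a b c d⟫ = Ff u v p 0 0 := by
    have e4 : cross3 (b - c) (a - c) = -cross3 (Wf u v p 0 0) u := by
      rw [hW00, hu, show b - c = (a - c) + (b - a) by abel, cross3_add_left]
    have e1 : cross3 (a - c) (a - d) = -cross3 (Wf u v p 0 0) v := by
      rw [hW00, hv, show a - d = (a - c) - (d - c) by abel, cross3_sub_right]
    rw [qn4, qn1, e4, e1, unitVec_neg, unitVec_neg, inner_neg_neg, inner_unitVec, Ff]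
  have term3 : Real.arcsin ⟪qn3 a b c d, qn4 a b c d⟫ = -Ff u v p 1 0 := by
    have e3 : cross3 (b - d) (b - c) = cross3 (Wf u v p 1 0) v := by
      rw [hW10, hv, show b - d = (b - c) - (d - c) by abel, cross3_sub_left]
    have e4 : cross3 (b - c) (a - c) = -cross3 (Wf u v p 1 0) u := by
      rw [hW10, hu, show a - c = (b - c) - (b - a) by abel, cross3_sub_right]
    rw [qn3, qn4, e3, e4, unitVec_neg, inner_neg_right, inner_unitVec,
      real_inner_comm, Real.arcsin_neg, Ff,
      mul_comm ‖cross3 (Wf u v p 1 0) v‖ ‖cross3 (Wf u v p 1 0) u‖]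
  have term1 : Real.arcsin ⟪qn1 a b c d, qn2 a b c d⟫ = -Ff u v p 0 1 := by
    have e1 : cross3 (a - c) (a - d) = -cross3 (Wf u v p 0 1) v := by
      rw [hW01, hv, show a - c = (a - d) + (d - c) by abel, cross3_add_left]
    have e2 : cross3 (a - d) (b - d) = cross3 (Wf u v p 0 1) u := by
      rw [hW01, hu, show b - d = (a - d) + (b - a) by abel, cross3_add_right]
    rw [qn1, qn2, e1, e2, unitVec_neg, inner_neg_left, inner_unitVec,
      real_inner_comm (cross3 (Wf u v p 0 1) u) (cross3 (Wf u v p 0 1) v),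
      Real.arcsin_neg, Ff,
      mul_comm ‖cross3 (Wf u v p 0 1) v‖ ‖cross3 (Wf u v p 0 1) u‖]
  -- rewrite the Gauss integral
  have hX : ∀ t s : ℝ, (a + t • (b - a)) - (c + s • (d - c)) = Wf u v p t s := by
    intro t s
    rw [Wf, hu, hv, hp]; abel
  have hgauss : gaussL a b c d
      = (1 / (4 * Real.pi)) * ((D / E) *
          ∫ t in (0:ℝ)..1, ∫ s in (0:ℝ)..1, E / ‖Wf u v p t s‖ ^ 3) := by
    rw [gaussL]
    congr 1
    rw [← intervalIntegral.integral_const_mul]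
    congr 1
    funext t
    rw [← intervalIntegral.integral_const_mul]
    congr 1
    funext s
    rw [hX, ← hu, ← hv, det3_uvW, ← hDdef]
    rw [div_mul_div_comm]
    rw [mul_comm D E, mul_div_mul_left _ _ hEpos.ne']
  set J := ∫ t in (0:ℝ)..1, ∫ s in (0:ℝ)..1, E / ‖Wf u v p t s‖ ^ 3 with hJ
  have hJval : J = Ff u v p 1 1 - Ff u v p 0 1 - (Ff u v p 1 0 - Ff u v p 0 0) := by
    rw [hJ, hE, hDdef]
    exact double_integral hD
  have hJnonneg : 0 ≤ J := by
    rw [hJ]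
    apply intervalIntegral.integral_nonneg zero_le_one
    intro t _
    apply intervalIntegral.integral_nonneg zero_le_one
    intro s _
    positivity
  have hDE : |D / E| = 1 := by
    rw [hE, abs_div, abs_abs, div_self (abs_ne_zero.mpr hD)]
  have hpi : (4 : ℝ) * Real.pi ≠ 0 := by positivity
  have lhs_eq : 4 * Real.pi * |gaussL a b c d| = J := by
    rw [hgauss, abs_mul, abs_mul, hDE, one_mul, abs_of_nonneg hJnonneg,
      abs_of_pos (by positivity : (0:ℝ) < 1 / (4 * Real.pi))]
    field_simp
  rw [lhs_eq, hJval, term1, term2, term3, term4]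
  ring
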